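/- For every discrete group G, every p ∈ [1,∞), and every finitely supported function f : G → ℂ, the operator norm of the left regular representation λ_p(f) on ℓ^p(G) equals the operator norm of the right regular representation ρ_p(f) on ℓ^p(G). -/

import Mathlib

open scoped ENNReal ComplexOrder
open Filter Topology

/-- `lam` is the left regular representation: `lam s` sends `δ_t` to `δ_{s t}`. -/
def IsLeftReg {G : Type*} [Group G] [DecidableEq G] {p : ℝ≥0∞} [Fact (1 ≤ p)]
    (lam : G → (lp (fun _ : G => ℂ) p →L[ℂ] lp (fun _ : G => ℂ) p)) : Prop :=
  ∀ s t : G, lam s (lp.single (E := fun _ : G => ℂ) p t 1) =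
    lp.single (E := fun _ : G => ℂ) p (s * t) 1

/-- `rho` is the right regular representation: `rho s` sends `δ_t` to `δ_{t s⁻¹}`. -/
def IsRightReg {G : Type*} [Group G] [DecidableEq G] {p : ℝ≥0∞} [Fact (1 ≤ p)]
    (rho : G → (lp (fun _ : G => ℂ) p →L[ℂ] lp (fun _ : G => ℂ) p)) : Prop :=
  ∀ s t : G, rho s (lp.single (E := fun _ : G => ℂ) p t 1) =
    lp.single (E := fun _ : G => ℂ) p (t * s⁻¹) 1

/-- Extension of a representation to finitely supported functions: `opOf lam f = Σ_s f(s) • lam s`. -/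
noncomputable def opOf {G : Type*} [Group G] {p : ℝ≥0∞} [Fact (1 ≤ p)]
    (lam : G → (lp (fun _ : G => ℂ) p →L[ℂ] lp (fun _ : G => ℂ) p)) (f : G →₀ ℂ) :
    lp (fun _ : G => ℂ) p →L[ℂ] lp (fun _ : G => ℂ) p :=
  f.sum fun s c => c • lam s

/-- A vector in `ℓ^p(G)` is nonnegative if all its coordinates are nonnegative reals. -/
def IsNonneg {G : Type*} {p : ℝ≥0∞} [Fact (1 ≤ p)] (ξ : lp (fun _ : G => ℂ) p) : Prop :=
  ∀ t : G, 0 ≤ ξ t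

section Aux
set_option linter.unusedSectionVars false

variable {G : Type*} [Group G] {p : ℝ≥0∞} [Fact (1 ≤ p)]

lemma memℓp_comp_inv (ξ : lp (fun _ : G => ℂ) p) :
    Memℓp (fun t : G => ξ t⁻¹) p := by
  have h := lp.memℓp ξ
  rcases ENNReal.trichotomy p with rfl | rfl | hpt
  · rw [memℓp_zero_iff] at h ⊢
    have : {t : G | ξ t⁻¹ ≠ 0} = (Equiv.inv G) ⁻¹' {t : G | ξ t ≠ 0} := rfl
    rw [this]
    exact h.preimage (Equiv.injective _).injOn
  · rw [memℓp_infty_iff] at h ⊢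
    have : (Set.range fun t : G => ‖ξ t⁻¹‖) = Set.range fun t : G => ‖ξ t‖ := by
      ext x
      constructor
      · rintro ⟨t, rfl⟩; exact ⟨t⁻¹, rfl⟩
      · rintro ⟨t, rfl⟩; exact ⟨t⁻¹, by simp⟩
    rwa [this]
  · have h' := h.summable hpt
    rw [memℓp_gen_iff hpt]
    exact ((Equiv.inv G).summable_iff (f := fun t : G => ‖ξ t‖ ^ p.toReal)).2 h'

noncomputable def flipIso (hp : p ≠ ⊤) :
    lp (fun _ : G => ℂ) p ≃ₗᵢ[ℂ] lp (fun _ : G => ℂ) p where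
  toFun ξ := ⟨fun t => ξ t⁻¹, memℓp_comp_inv ξ⟩
  invFun ξ := ⟨fun t => ξ t⁻¹, memℓp_comp_inv ξ⟩
  left_inv ξ := by ext t; simp
  right_inv ξ := by ext t; simp
  map_add' ξ η := by ext t; simp; rfl
  map_smul' c ξ := by ext t; simp
  norm_map' ξ := by
    have hp0 : (0 : ℝ≥0∞) < p := zero_lt_one.trans_le Fact.out
    have hpt : 0 < p.toReal := ENNReal.toReal_pos hp0.ne' hp
    rw [lp.norm_eq_tsum_rpow hpt, lp.norm_eq_tsum_rpow hpt]
    congr 1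
    exact (Equiv.inv G).tsum_eq (f := fun t : G => ‖ξ t‖ ^ p.toReal)

variable [DecidableEq G]

lemma flipIso_single (hp : p ≠ ⊤) (t : G) (c : ℂ) :
    flipIso (G := G) hp (lp.single (E := fun _ : G => ℂ) p t c) =
      lp.single (E := fun _ : G => ℂ) p t⁻¹ c := by
  ext s
  show (lp.single (E := fun _ : G => ℂ) p t c) s⁻¹ = _
  rw [lp.single_apply, lp.single_apply]
  by_cases h : s = t⁻¹
  · subst h; simp
  · rw [Pi.single_apply, Pi.single_apply, if_neg h, if_neg]
    intro hs; exact h (by rw [← hs]; simp)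

lemma single_smul_one (t : G) (c : ℂ) :
    lp.single (E := fun _ : G => ℂ) p t c = c • lp.single (E := fun _ : G => ℂ) p t 1 := by
  ext s
  rw [lp.coeFn_smul, Pi.smul_apply, lp.single_apply, lp.single_apply]
  by_cases h : s = t
  · simp [h]
  · simp [Pi.single_apply, h]

lemma clm_ext_single (hp : p ≠ ⊤)
    (T S : lp (fun _ : G => ℂ) p →L[ℂ] lp (fun _ : G => ℂ) p)
    (h : ∀ t : G, T (lp.single (E := fun _ : G => ℂ) p t 1) =
      S (lp.single (E := fun _ : G => ℂ) p t 1)) : T = S := by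
  refine ContinuousLinearMap.ext fun ξ => ?_
  have hs := lp.hasSum_single hp ξ
  have hT := hs.mapL T
  have hS := hs.mapL S
  refine hT.unique ?_
  convert hS using 2 with t
  rw [single_smul_one t (ξ t), map_smul, map_smul, h t]

theorem stmt0' {G : Type*} [Group G] [DecidableEq G] {p : ℝ≥0∞} [Fact (1 ≤ p)] (hp : p ≠ ⊤)
    (lam rho : G → (lp (fun _ : G => ℂ) p →L[ℂ] lp (fun _ : G => ℂ) p))
    (hlam : ∀ s t : G, lam s (lp.single (E := fun _ : G => ℂ) p t 1) =
      lp.single (E := fun _ : G => ℂ) p (s * t) 1)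
    (hrho : ∀ s t : G, rho s (lp.single (E := fun _ : G => ℂ) p t 1) =
      lp.single (E := fun _ : G => ℂ) p (t * s⁻¹) 1)
    (f : G →₀ ℂ) :
    ‖(f.sum fun s c => c • lam s : lp (fun _ : G => ℂ) p →L[ℂ] lp (fun _ : G => ℂ) p)‖ =
      ‖(f.sum fun s c => c • rho s : lp (fun _ : G => ℂ) p →L[ℂ] lp (fun _ : G => ℂ) p)‖ := by
  set U := flipIso (G := G) hp
  set T : lp (fun _ : G => ℂ) p →L[ℂ] lp (fun _ : G => ℂ) p := f.sum fun s c => c • lam s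
  set S : lp (fun _ : G => ℂ) p →L[ℂ] lp (fun _ : G => ℂ) p := f.sum fun s c => c • rho s
  have key : S = (U.toLinearIsometry.toContinuousLinearMap.comp T).comp
      U.toLinearIsometry.toContinuousLinearMap := by
    refine clm_ext_single hp _ _ fun t => ?_
    have hU : ∀ (u : G), U (lp.single (E := fun _ : G => ℂ) p u 1) =
        lp.single (E := fun _ : G => ℂ) p u⁻¹ 1 := fun u => flipIso_single hp u 1
    have happly : ∀ (R : G → (lp (fun _ : G => ℂ) p →L[ℂ] lp (fun _ : G => ℂ) p)) ξ,
        (f.sum fun s c => c • R s) ξ = f.sum fun s c => c • (R s ξ) := by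
      intro R ξ
      simp only [Finsupp.sum, ContinuousLinearMap.coe_sum', Finset.sum_apply,
        ContinuousLinearMap.coe_smul', Pi.smul_apply]
    rw [ContinuousLinearMap.comp_apply, ContinuousLinearMap.comp_apply]
    show S _ = U (T (U _))
    rw [hU t, happly, happly]
    simp only [hlam, hrho]
    rw [map_finsuppSum]
    refine Finsupp.sum_congr fun s _ => ?_
    rw [map_smul, flipIso_single]
    simp [mul_inv_rev]
  rw [key]
  exact ((ContinuousLinearMap.opNorm_comp_linearIsometryEquiv _ U).trans
    U.toLinearIsometry.norm_toContinuousLinearMap_comp).symm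

end Aux

theorem stmt0 {G : Type*} [Group G] [DecidableEq G] {p : ℝ≥0∞} [Fact (1 ≤ p)] (hp : p ≠ ⊤)
    (lam rho : G → (lp (fun _ : G => ℂ) p →L[ℂ] lp (fun _ : G => ℂ) p))
    (hlam : IsLeftReg lam) (hrho : IsRightReg rho) (f : G →₀ ℂ) :
    ‖opOf lam f‖ = ‖opOf rho f‖ := stmt0' hp lam rho hlam hrho f
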